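/- arXiv:1410.2364 — 2 statements merged into one kernel-verified Lean document; each statement's English description precedes it below -/
import Mathlib

section
/- Let a > 0, b ∈ ℝ, σ > 0, γ > 1, and define F(x) = ½(x^{-1/2} - x^{-1})(2a - bx - (γσ²/2)x^{2γ-1}) + (σ²/4)(-½x^{-3/2} + x^{-2})x^{2γ} for x > 0. Then F is bounded above on (0,∞), i.e., there exists K such that F(x) ≤ K for all x > 0. -/
lemma aux_small (a b σ γ q s : ℝ) (ha : 0 < a) (hσ : 0 < σ) (hγ : 1 < γ)
    (hq : 0 < q) (hq1 : q ≤ 1) (hs : 0 < s) (hs1 : s ≤ 1) :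
    a * ((q - 1) / q ^ 2) - b / 2 * (q - 1) - γ * σ ^ 2 / 4 * (s * (q - 1))
      - σ ^ 2 / 8 * (s * q) + σ ^ 2 / 4 * s ≤ |b| / 2 + γ * σ ^ 2 / 4 + σ ^ 2 / 4 := by
  have h0 : a * ((q - 1) / q ^ 2) ≤ 0 :=
    mul_nonpos_of_nonneg_of_nonpos ha.le
      (div_nonpos_of_nonpos_of_nonneg (by linarith) (sq_nonneg q))
  have hσ2 : (0:ℝ) < σ ^ 2 := by positivity
  have hc2 : (0:ℝ) ≤ γ * σ ^ 2 / 4 := by nlinarith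
  nlinarith [mul_nonneg (sub_nonneg.2 (le_abs_self b)) (sub_nonneg.2 hq1),
    mul_nonneg (abs_nonneg b) hq.le,
    mul_nonneg hc2 (mul_nonneg (sub_nonneg.2 hs1) (sub_nonneg.2 hq1)),
    mul_nonneg hc2 hq.le,
    mul_nonneg (mul_nonneg hσ2.le hs.le) hq.le,
    mul_nonneg hσ2.le (sub_nonneg.2 hs1)]

lemma aux_large (a b σ γ q s : ℝ) (ha : 0 < a) (hσ : 0 < σ) (hγ : 1 < γ)
    (hq1 : 1 ≤ q) (hs : 0 < s)
    (hq2 : 2 * (γ * σ ^ 2 / 4 + σ ^ 2 / 4) ≤ (γ * σ ^ 2 / 4 + σ ^ 2 / 8) * q)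
    (hs2 : |b| ≤ (γ * σ ^ 2 / 4 + σ ^ 2 / 8) * s) :
    a * ((q - 1) / q ^ 2) - b / 2 * (q - 1) - γ * σ ^ 2 / 4 * (s * (q - 1))
      - σ ^ 2 / 8 * (s * q) + σ ^ 2 / 4 * s ≤ a := by
  have h0 : a * ((q - 1) / q ^ 2) ≤ a := by
    have h1 : (q - 1) / q ^ 2 ≤ 1 := by
      rw [div_le_one (by positivity)]; nlinarith
    nlinarith
  nlinarith [mul_nonneg (sub_nonneg.2 (neg_abs_le b)) (by linarith : (0:ℝ) ≤ q - 1),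
    mul_nonneg hs.le (by linarith : (0:ℝ) ≤ (γ * σ ^ 2 / 4 + σ ^ 2 / 8) * q - 2 * (γ * σ ^ 2 / 4 + σ ^ 2 / 4)),
    mul_nonneg (by linarith : (0:ℝ) ≤ q) (by linarith : (0:ℝ) ≤ (γ * σ ^ 2 / 4 + σ ^ 2 / 8) * s - |b|),
    abs_nonneg b]

lemma aux_rw (a b σ γ x : ℝ) (hx : 0 < x) :
    (1 / 2) * (x ^ (-(1 : ℝ) / 2) - x ^ (-1 : ℝ)) *
          (2 * a - b * x - (γ * σ ^ 2 / 2) * x ^ (2 * γ - 1)) +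
        (σ ^ 2 / 4) * (-(1 / 2) * x ^ (-(3 : ℝ) / 2) + x ^ (-2 : ℝ)) * x ^ (2 * γ) =
      a * ((x ^ ((1:ℝ)/2) - 1) / (x ^ ((1:ℝ)/2)) ^ 2) - b / 2 * (x ^ ((1:ℝ)/2) - 1)
        - γ * σ ^ 2 / 4 * (x ^ (2 * γ - 2) * (x ^ ((1:ℝ)/2) - 1))
        - σ ^ 2 / 8 * (x ^ (2 * γ - 2) * x ^ ((1:ℝ)/2)) + σ ^ 2 / 4 * x ^ (2 * γ - 2) := by
  have hq : (0:ℝ) < x ^ ((1:ℝ)/2) := Real.rpow_pos_of_pos hx _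
  have hs : (0:ℝ) < x ^ (2 * γ - 2) := Real.rpow_pos_of_pos hx _
  have hx2 : (x ^ ((1:ℝ)/2)) ^ 2 = x := by
    rw [← Real.rpow_natCast (x ^ ((1:ℝ)/2)) 2, ← Real.rpow_mul hx.le]
    norm_num
  have e1 : x ^ (-(1:ℝ) / 2) = (x ^ ((1:ℝ)/2))⁻¹ := by
    rw [← Real.rpow_neg hx.le]; norm_num
  have e2 : x ^ (-1:ℝ) = ((x ^ ((1:ℝ)/2)) ^ 2)⁻¹ := by
    rw [hx2, Real.rpow_neg_one]
  have e4 : x ^ (-(3:ℝ) / 2) = ((x ^ ((1:ℝ)/2)) ^ 3)⁻¹ := by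
    rw [← Real.rpow_natCast (x ^ ((1:ℝ)/2)) 3, ← Real.rpow_mul hx.le, ← Real.rpow_neg hx.le]
    norm_num
  have e5 : x ^ (-2:ℝ) = ((x ^ ((1:ℝ)/2)) ^ 4)⁻¹ := by
    rw [← Real.rpow_natCast (x ^ ((1:ℝ)/2)) 4, ← Real.rpow_mul hx.le, ← Real.rpow_neg hx.le]
    norm_num
  have e3 : x ^ (2 * γ - 1) = x ^ (2 * γ - 2) * (x ^ ((1:ℝ)/2)) ^ 2 := by
    rw [← Real.rpow_natCast (x ^ ((1:ℝ)/2)) 2, ← Real.rpow_mul hx.le, ← Real.rpow_add hx]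
    congr 1; push_cast; ring
  have e6 : x ^ (2 * γ) = x ^ (2 * γ - 2) * (x ^ ((1:ℝ)/2)) ^ 4 := by
    rw [← Real.rpow_natCast (x ^ ((1:ℝ)/2)) 4, ← Real.rpow_mul hx.le, ← Real.rpow_add hx]
    congr 1; push_cast; ring
  rw [e1, e2, e3, e4, e5, e6]
  rw [show b * x = b * (x ^ ((1:ℝ)/2)) ^ 2 by rw [hx2]]
  field_simp
  ring

theorem stmt_4 (a b σ γ : ℝ) (ha : 0 < a) (hσ : 0 < σ) (hγ : 1 < γ) :
    ∃ K : ℝ, ∀ x : ℝ, 0 < x →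
      (1 / 2) * (x ^ (-(1 : ℝ) / 2) - x ^ (-1 : ℝ)) *
          (2 * a - b * x - (γ * σ ^ 2 / 2) * x ^ (2 * γ - 1)) +
        (σ ^ 2 / 4) * (-(1 / 2) * x ^ (-(3 : ℝ) / 2) + x ^ (-2 : ℝ)) * x ^ (2 * γ) ≤ K := by
  have hσ2 : (0:ℝ) < σ ^ 2 := by positivity
  obtain ⟨A, hAdef⟩ : ∃ A : ℝ, A = γ * σ ^ 2 / 4 + σ ^ 2 / 8 := ⟨_, rfl⟩
  obtain ⟨B, hBdef⟩ : ∃ B : ℝ, B = γ * σ ^ 2 / 4 + σ ^ 2 / 4 := ⟨_, rfl⟩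
  have hApos : (0:ℝ) < A := by rw [hAdef]; nlinarith
  have hBpos : (0:ℝ) < B := by rw [hBdef]; nlinarith
  obtain ⟨m, hmdef⟩ : ∃ m : ℝ, m = max 1 (|b| / A) := ⟨_, rfl⟩
  have hm1 : (1:ℝ) ≤ m := hmdef ▸ le_max_left _ _
  have hmpos : (0:ℝ) < m := lt_of_lt_of_le one_pos hm1
  obtain ⟨T1, hT1def⟩ : ∃ T1 : ℝ, T1 = (2 * B / A) ^ 2 := ⟨_, rfl⟩
  obtain ⟨T2, hT2def⟩ : ∃ T2 : ℝ, T2 = m ^ ((1:ℝ) / (2 * γ - 2)) := ⟨_, rfl⟩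
  obtain ⟨x₁, hx₁def⟩ : ∃ x₁ : ℝ, x₁ = max 1 (max T1 T2) := ⟨_, rfl⟩
  have hx₁1 : (1:ℝ) ≤ x₁ := hx₁def ▸ le_max_left _ _
  have hne : ∀ y ∈ Set.Icc (1:ℝ) x₁, y ≠ (0:ℝ) := fun y hy =>
    ne_of_gt (lt_of_lt_of_le one_pos hy.1)
  have hpow : ∀ e : ℝ, ContinuousOn (fun y : ℝ => y ^ e) (Set.Icc (1:ℝ) x₁) := fun e =>
    ContinuousOn.rpow_const continuousOn_id (fun y hy => Or.inl (hne y hy))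
  have hcont : ContinuousOn (fun x : ℝ =>
      (1 / 2) * (x ^ (-(1 : ℝ) / 2) - x ^ (-1 : ℝ)) *
          (2 * a - b * x - (γ * σ ^ 2 / 2) * x ^ (2 * γ - 1)) +
        (σ ^ 2 / 4) * (-(1 / 2) * x ^ (-(3 : ℝ) / 2) + x ^ (-2 : ℝ)) * x ^ (2 * γ))
      (Set.Icc (1:ℝ) x₁) :=
    (((continuousOn_const.mul ((hpow _).sub (hpow _))).mul
      ((continuousOn_const.sub (continuousOn_const.mul continuousOn_id)).sub
        (continuousOn_const.mul (hpow _)))).add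
      (((continuousOn_const.mul ((continuousOn_const.mul (hpow _)).add (hpow _))).mul (hpow _))))
  obtain ⟨K₁, hK₁⟩ := (isCompact_Icc (a := (1:ℝ)) (b := x₁)).exists_bound_of_continuousOn hcont
  refine ⟨max (max (|b| / 2 + γ * σ ^ 2 / 4 + σ ^ 2 / 4) a) K₁, ?_⟩
  intro x hx
  have hq : (0:ℝ) < x ^ ((1:ℝ)/2) := Real.rpow_pos_of_pos hx _
  have hs : (0:ℝ) < x ^ (2 * γ - 2) := Real.rpow_pos_of_pos hx _
  have hrw := aux_rw a b σ γ x hx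
  rcases le_or_gt x 1 with h1 | h1
  · have hq1 : x ^ ((1:ℝ)/2) ≤ 1 := Real.rpow_le_one hx.le h1 (by norm_num)
    have hs1 : x ^ (2 * γ - 2) ≤ 1 := Real.rpow_le_one hx.le h1 (by nlinarith)
    rw [hrw]
    calc _ ≤ |b| / 2 + γ * σ ^ 2 / 4 + σ ^ 2 / 4 :=
          aux_small a b σ γ _ _ ha hσ hγ hq hq1 hs hs1
      _ ≤ _ := le_trans (le_max_left _ _) (le_max_left _ _)
  rcases le_or_gt x x₁ with h2 | h2
  · have := hK₁ x ⟨h1.le, h2⟩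
    rw [Real.norm_eq_abs] at this
    exact le_trans (le_of_abs_le this) (le_max_right _ _)
  · have hxT1 : T1 ≤ x := le_of_lt (lt_of_le_of_lt
      (le_trans (le_max_left T1 T2) (hx₁def ▸ le_max_right 1 (max T1 T2))) h2)
    have hxT2 : T2 ≤ x := le_of_lt (lt_of_le_of_lt
      (le_trans (le_max_right T1 T2) (hx₁def ▸ le_max_right 1 (max T1 T2))) h2)
    have hx1 : (1:ℝ) ≤ x := le_of_lt (lt_of_le_of_lt hx₁1 h2)
    have hq1 : (1:ℝ) ≤ x ^ ((1:ℝ)/2) := by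
      calc (1:ℝ) = (1:ℝ) ^ ((1:ℝ)/2) := (Real.one_rpow _).symm
        _ ≤ x ^ ((1:ℝ)/2) := Real.rpow_le_rpow zero_le_one hx1 (by norm_num)
    have hx2 : (x ^ ((1:ℝ)/2)) ^ 2 = x := by
      rw [← Real.rpow_natCast (x ^ ((1:ℝ)/2)) 2, ← Real.rpow_mul hx.le]
      norm_num
    have hq2 : 2 * B ≤ A * x ^ ((1:ℝ)/2) := by
      have hr : (0:ℝ) < 2 * B / A := by positivity
      have h : (2 * B / A) ^ 2 ≤ (x ^ ((1:ℝ)/2)) ^ 2 := by rw [hx2, ← hT1def]; exact hxT1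
      have hqr : 2 * B / A ≤ x ^ ((1:ℝ)/2) := by nlinarith
      rw [div_le_iff₀ hApos] at hqr
      linarith
    have hs2 : |b| ≤ A * x ^ (2 * γ - 2) := by
      have hexp : (0:ℝ) < 2 * γ - 2 := by linarith
      have h1' : T2 ^ (2 * γ - 2) ≤ x ^ (2 * γ - 2) :=
        Real.rpow_le_rpow (le_of_lt (by rw [hT2def]; exact Real.rpow_pos_of_pos hmpos _)) hxT2 hexp.le
      have h2' : T2 ^ (2 * γ - 2) = m := by
        rw [hT2def, ← Real.rpow_mul hmpos.le, one_div, inv_mul_cancel₀ (ne_of_gt hexp), Real.rpow_one]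
      rw [h2'] at h1'
      have h3' : |b| / A ≤ x ^ (2 * γ - 2) :=
        le_trans (hmdef ▸ le_max_right (1:ℝ) (|b| / A)) h1'
      rw [div_le_iff₀ hApos] at h3'
      linarith
    rw [hAdef] at hq2 hs2
    rw [hBdef] at hq2
    rw [hrw]
    calc _ ≤ a := aux_large a b σ γ _ _ ha hσ hγ hq1 hs hq2 hs2
      _ ≤ _ := le_trans (le_max_right _ _) (le_max_left _ _)
end

section
/- Let σ > 0, b > 0, and ½ ≤ γ < 1 with γ/σ ≥ 1. Define the scale density integrand h(y) = y^{-γ/σ} · exp( b/(σ²(1-γ)) · y^{2(1-γ)} ) for y > 0, and p(x) = e^{-b/(σ²(1-γ))} ∫₁ˣ h(y) dy. Then lim_{x→0⁺} p(x) = -∞ and lim_{x→∞} p(x) = +∞. -/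
open Filter Real MeasureTheory intervalIntegral

lemma aux_cont (a c β : ℝ) :
    ContinuousOn (fun y : ℝ => y ^ (-a) * Real.exp (c * y ^ β)) (Set.Ioi 0) := by
  intro y hy
  have hy0 : (0:ℝ) < y := hy
  apply ContinuousAt.continuousWithinAt
  exact (Real.continuousAt_rpow_const y (-a) (Or.inl hy0.ne')).mul
    (Real.continuous_exp.continuousAt.comp
      (continuousAt_const.mul (Real.continuousAt_rpow_const y β (Or.inl hy0.ne'))))

lemma aux_intble (a c β u v : ℝ) (hu : 0 < u) (hv : 0 < v) :
    IntervalIntegrable (fun y : ℝ => y ^ (-a) * Real.exp (c * y ^ β))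
      MeasureTheory.volume u v := by
  apply ContinuousOn.intervalIntegrable
  apply (aux_cont a c β).mono
  intro y hy
  exact lt_of_lt_of_le (lt_min hu hv) hy.1

lemma aux_tendsto (a c β : ℝ) (hc : 0 < c) (hβ : 0 < β) :
    Tendsto (fun y : ℝ => y ^ (-a) * Real.exp (c * y ^ β)) atTop atTop := by
  have h1 : Tendsto (fun y : ℝ => c * y ^ β - a * Real.log y) atTop atTop := by
    have hlo := (isLittleO_log_rpow_atTop hβ).tendsto_div_nhds_zero
    have h2 : Tendsto (fun y : ℝ => c - a * (Real.log y / y ^ β)) atTop (nhds c) := by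
      have h := hlo.const_mul a
      have h' := (tendsto_const_nhds (x := c) (f := (atTop : Filter ℝ))).sub h
      simpa using h'
    have h3 : Tendsto (fun y : ℝ => y ^ β) atTop atTop := tendsto_rpow_atTop hβ
    have h4 := h3.atTop_mul_pos hc h2
    apply h4.congr'
    filter_upwards [eventually_gt_atTop (0:ℝ)] with y hy
    have hne : (y:ℝ) ^ β ≠ 0 := (Real.rpow_pos_of_pos hy β).ne'
    field_simp
  have h5 := Real.tendsto_exp_atTop.comp h1
  apply h5.congr'
  filter_upwards [eventually_gt_atTop (0:ℝ)] with y hy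
  simp only [Function.comp]
  rw [Real.rpow_def_of_pos hy (-a), ← Real.exp_add]
  congr 1
  ring

theorem stmt_8 (σ b γ : ℝ) (hσ : 0 < σ) (hb : 0 < b)
    (hγ₁ : 1 / 2 ≤ γ) (hγ₂ : γ < 1) (hγσ : 1 ≤ γ / σ) :
    Filter.Tendsto
      (fun x : ℝ => Real.exp (-(b / (σ ^ 2 * (1 - γ)))) *
        ∫ y in (1 : ℝ)..x,
          y ^ (-(γ / σ)) * Real.exp (b / (σ ^ 2 * (1 - γ)) * y ^ (2 * (1 - γ))))
      (nhdsWithin 0 (Set.Ioi 0)) Filter.atBot ∧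
    Filter.Tendsto
      (fun x : ℝ => Real.exp (-(b / (σ ^ 2 * (1 - γ)))) *
        ∫ y in (1 : ℝ)..x,
          y ^ (-(γ / σ)) * Real.exp (b / (σ ^ 2 * (1 - γ)) * y ^ (2 * (1 - γ))))
      Filter.atTop Filter.atTop := by
  set a : ℝ := γ / σ with ha
  set c : ℝ := b / (σ ^ 2 * (1 - γ)) with hcdef
  set β : ℝ := 2 * (1 - γ) with hβdef
  have hβ : 0 < β := by rw [hβdef]; linarith
  have hc : 0 < c := by
    rw [hcdef]
    have h1γ : 0 < 1 - γ := by linarith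
    positivity
  set h : ℝ → ℝ := fun y : ℝ => y ^ (-a) * Real.exp (c * y ^ β) with hh
  set E : ℝ := Real.exp (-c) with hE
  have hE0 : 0 < E := Real.exp_pos _
  constructor
  · -- x → 0⁺
    have hlim : Tendsto (fun x : ℝ => E * Real.log x) (nhdsWithin 0 (Set.Ioi 0)) atBot :=
      Real.tendsto_log_nhdsGT_zero.const_mul_atBot hE0
    apply tendsto_atBot_mono' _ _ hlim
    filter_upwards [Ioo_mem_nhdsGT_of_mem (Set.mem_Ico.mpr ⟨le_refl (0:ℝ), one_pos⟩)]
      with x hx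
    obtain ⟨hx0, hx1⟩ := hx
    have hIinv : IntervalIntegrable (fun y : ℝ => y⁻¹) MeasureTheory.volume x 1 := by
      apply intervalIntegrable_inv
      · intro y hy
        rw [Set.uIcc_of_le hx1.le] at hy
        exact (lt_of_lt_of_le hx0 hy.1).ne'
      · exact continuousOn_id
    have hIh : IntervalIntegrable h MeasureTheory.volume x 1 := aux_intble a c β x 1 hx0 one_pos
    have hmono : (∫ y in x..(1:ℝ), y⁻¹) ≤ ∫ y in x..(1:ℝ), h y := by
      apply intervalIntegral.integral_mono_on hx1.le hIinv hIh
      intro y hy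
      have hy0 : 0 < y := lt_of_lt_of_le hx0 hy.1
      have h1 : y⁻¹ = y ^ (-1:ℝ) := (Real.rpow_neg_one y).symm
      have h2 : y ^ (-1:ℝ) ≤ y ^ (-a) :=
        Real.rpow_le_rpow_of_exponent_ge hy0 hy.2 (by linarith)
      have h3 : y ^ (-a) ≤ h y := by
        rw [hh]
        refine le_mul_of_one_le_right (Real.rpow_nonneg hy0.le _) ?_
        exact Real.one_le_exp (mul_nonneg hc.le (Real.rpow_nonneg hy0.le _))
      calc y⁻¹ = y ^ (-1:ℝ) := h1
        _ ≤ y ^ (-a) := h2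
        _ ≤ h y := h3
    have hinv_val : (∫ y in x..(1:ℝ), y⁻¹) = -Real.log x := by
      rw [integral_inv]
      · rw [one_div, Real.log_inv]
      · rw [Set.uIcc_of_le hx1.le]
        intro hmem
        exact absurd hmem.1 (not_le.mpr hx0)
    have hsymm : (∫ y in (1:ℝ)..x, h y) = -(∫ y in x..(1:ℝ), h y) :=
      intervalIntegral.integral_symm x 1
    have hle : (∫ y in (1:ℝ)..x, h y) ≤ Real.log x := by
      rw [hsymm]
      rw [hinv_val] at hmono
      linarith
    exact mul_le_mul_of_nonneg_left hle hE0.le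
  · -- x → ∞
    obtain ⟨Y₀, hY₀⟩ := ((aux_tendsto a c β hc hβ).eventually_ge_atTop 1).exists_forall_of_atTop
    set Y : ℝ := max Y₀ 1 with hY
    have hY1 : (1:ℝ) ≤ Y := le_max_right _ _
    have hY0 : (0:ℝ) < Y := lt_of_lt_of_le one_pos hY1
    set C : ℝ := ∫ y in (1:ℝ)..Y, h y with hC
    have hlim : Tendsto (fun x : ℝ => E * (C + (x - Y))) atTop atTop := by
      apply Tendsto.const_mul_atTop hE0
      apply tendsto_atTop_add_const_left
      exact tendsto_atTop_add_const_right _ _ tendsto_id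
    apply tendsto_atTop_mono' _ _ hlim
    filter_upwards [eventually_ge_atTop Y] with x hxY
    have hx0 : 0 < x := lt_of_lt_of_le hY0 hxY
    have hI1Y : IntervalIntegrable h MeasureTheory.volume 1 Y := aux_intble a c β 1 Y one_pos hY0
    have hIYx : IntervalIntegrable h MeasureTheory.volume Y x := aux_intble a c β Y x hY0 hx0
    have hsplit : (∫ y in (1:ℝ)..Y, h y) + (∫ y in Y..x, h y) = ∫ y in (1:ℝ)..x, h y :=
      intervalIntegral.integral_add_adjacent_intervals hI1Y hIYx
    have hmono : (x - Y) ≤ ∫ y in Y..x, h y := by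
      have h1 : (∫ y in Y..x, (1:ℝ)) ≤ ∫ y in Y..x, h y := by
        apply intervalIntegral.integral_mono_on hxY intervalIntegrable_const hIYx
        intro y hy
        exact hY₀ y (le_trans (le_max_left _ _) hy.1)
      simpa using h1
    have : E * (C + (x - Y)) ≤ E * ∫ y in (1:ℝ)..x, h y := by
      apply mul_le_mul_of_nonneg_left _ hE0.le
      rw [← hsplit]
      linarith
    exact this
end
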